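/- arXiv:2204.05709 — 4 statements merged into one kernel-verified Lean document; each statement's English description precedes it below -/
import Mathlib

section
/- Let ν and ν' be probability measures on a measurable space with ν absolutely continuous with respect to ν', and let f be a measurable ℝ^d-valued function that is integrable with respect to both ν and ν'. Then ‖∫ f dν − ∫ f dν'‖² ≤ 2 (1 + log ∫ e^{‖f‖²} dν') · H(ν | ν'), where the right-hand side is interpreted as +∞ if ∫ e^{‖f‖²} dν' = +∞ or H(ν | ν') = +∞. -/
open MeasureTheory ProbabilityTheory Real

/-- Padé-type lower bound for `log` on `[1, ∞)`. -/
lemma wp_log_pade_lower {y : ℝ} (hy : 1 ≤ y) :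
    3 * (y ^ 2 - 1) / (y ^ 2 + 4 * y + 1) ≤ Real.log y := by
  set F : ℝ → ℝ := fun y => Real.log y - 3 * (y ^ 2 - 1) / (y ^ 2 + 4 * y + 1) with hF
  have hden : ∀ x : ℝ, 1 ≤ x → 0 < x ^ 2 + 4 * x + 1 := by intro x hx; nlinarith
  have hderiv : ∀ x ∈ interior (Set.Ici (1:ℝ)),
      HasDerivAt F ((x - 1) ^ 4 / (x * (x ^ 2 + 4 * x + 1) ^ 2)) x := by
    intro x hx
    rw [interior_Ici] at hx
    have hx1 : (1:ℝ) < x := hx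
    have hx0 : x ≠ 0 := by linarith
    have hd0 : x ^ 2 + 4 * x + 1 ≠ 0 := ne_of_gt (hden x hx1.le)
    have h1 : HasDerivAt Real.log x⁻¹ x := Real.hasDerivAt_log hx0
    have h2 : HasDerivAt (fun y : ℝ => 3 * (y ^ 2 - 1)) (6 * x) x := by
      have := ((hasDerivAt_pow 2 x).sub_const 1).const_mul (3:ℝ)
      refine this.congr_deriv ?_; ring
    have h3 : HasDerivAt (fun y : ℝ => y ^ 2 + 4 * y + 1) (2 * x + 4) x := by
      have := (((hasDerivAt_pow 2 x).add ((hasDerivAt_id x).const_mul 4)).add_const 1)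
      refine this.congr_deriv ?_; ring
    have h4 := h2.div h3 hd0
    have h5 := h1.sub h4
    refine h5.congr_deriv ?_
    field_simp
    ring
  have hmono : MonotoneOn F (Set.Ici (1:ℝ)) := by
    refine monotoneOn_of_deriv_nonneg (convex_Ici 1) ?_ ?_ ?_
    · apply ContinuousOn.sub
      · exact Real.continuousOn_log.mono (by intro x hx; simp at hx ⊢; intro h; rw [h] at hx; linarith)
      · apply ContinuousOn.div (by fun_prop) (by fun_prop)
        intro x hx; exact ne_of_gt (hden x hx)
    · intro x hx
      exact (hderiv x hx).differentiableAt.differentiableWithinAt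
    · intro x hx
      rw [(hderiv x hx).deriv]
      rw [interior_Ici] at hx
      have hx1 : (1:ℝ) < x := hx
      exact div_nonneg (by positivity)
        (le_of_lt (mul_pos (by linarith) (pow_pos (hden x hx1.le) 2)))
  have h1 : F 1 ≤ F y := hmono (by simp) hy hy
  have hF1 : F 1 = 0 := by simp [hF]
  rw [hF1] at h1
  simp only [hF, sub_nonneg] at h1
  linarith

/-- Padé-type upper bound for `log` on `[1, ∞)`. -/
lemma wp_log_pade_upper {y : ℝ} (hy : 1 ≤ y) :
    Real.log y ≤ (y ^ 2 + 4 * y - 5) / (4 * y + 2) := by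
  set F : ℝ → ℝ := fun y => (y ^ 2 + 4 * y - 5) / (4 * y + 2) - Real.log y with hF
  have hden : ∀ x : ℝ, 1 ≤ x → 0 < 4 * x + 2 := by intro x hx; linarith
  have hderiv : ∀ x ∈ interior (Set.Ici (1:ℝ)),
      HasDerivAt F (4 * (x - 1) ^ 3 / (x * (4 * x + 2) ^ 2)) x := by
    intro x hx
    rw [interior_Ici] at hx
    have hx1 : (1:ℝ) < x := hx
    have hx0 : x ≠ 0 := by linarith
    have hd0 : 4 * x + 2 ≠ 0 := ne_of_gt (hden x hx1.le)
    have h1 : HasDerivAt Real.log x⁻¹ x := Real.hasDerivAt_log hx0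
    have h2 : HasDerivAt (fun y : ℝ => y ^ 2 + 4 * y - 5) (2 * x + 4) x := by
      have := (((hasDerivAt_pow 2 x).add ((hasDerivAt_id x).const_mul 4)).sub_const 5)
      refine this.congr_deriv ?_; ring
    have h3 : HasDerivAt (fun y : ℝ => 4 * y + 2) 4 x := by
      have := ((hasDerivAt_id x).const_mul (4:ℝ)).add_const 2
      refine this.congr_deriv ?_; ring
    have h4 := h2.div h3 hd0
    have h5 := h4.sub h1
    refine h5.congr_deriv ?_
    field_simp
    ring
  have hmono : MonotoneOn F (Set.Ici (1:ℝ)) := by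
    refine monotoneOn_of_deriv_nonneg (convex_Ici 1) ?_ ?_ ?_
    · apply ContinuousOn.sub
      · apply ContinuousOn.div (by fun_prop) (by fun_prop)
        intro x hx; exact ne_of_gt (hden x hx)
      · exact Real.continuousOn_log.mono (by intro x hx; simp at hx ⊢; intro h; rw [h] at hx; linarith)
    · intro x hx
      exact (hderiv x hx).differentiableAt.differentiableWithinAt
    · intro x hx
      rw [(hderiv x hx).deriv]
      rw [interior_Ici] at hx
      have hx1 : (1:ℝ) < x := hx
      have h3 : (0:ℝ) ≤ (x - 1) ^ 3 := pow_nonneg (by linarith) 3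
      exact div_nonneg (by linarith)
        (le_of_lt (mul_pos (by linarith) (pow_pos (hden x hx1.le) 2)))
  have h1 : F 1 ≤ F y := hmono (by simp) hy hy
  have hF1 : F 1 = 0 := by norm_num [hF]
  rw [hF1] at h1
  simp only [hF, sub_nonneg] at h1
  linarith

/-- Key pointwise inequality for the weighted Pinsker proof. -/
lemma wp_key_pointwise {x : ℝ} (hx : 0 ≤ x) :
    3 * (x - 1) ^ 2 ≤ 2 * (x + 2) * (x * Real.log x - x + 1) := by
  rcases eq_or_lt_of_le hx with h0 | hx0
  · rw [← h0]; norm_num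
  rcases le_or_gt 1 x with hx1 | hx1
  · have hpade := wp_log_pade_lower hx1
    have hden : (0:ℝ) < x ^ 2 + 4 * x + 1 := by nlinarith
    rw [div_le_iff₀ hden] at hpade
    have hmul := mul_le_mul_of_nonneg_left hpade hx
    have h2 : (x - 1) ^ 2 * (2 * x + 1) ≤ (x * Real.log x - x + 1) * (x ^ 2 + 4 * x + 1) := by
      nlinarith [hmul]
    have h5 : 3 * (x - 1) ^ 2 ≤ 2 * (x + 2) * ((x - 1) ^ 2 * (2 * x + 1)) / (x ^ 2 + 4 * x + 1) := by
      rw [le_div_iff₀ hden]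
      nlinarith [sq_nonneg ((x - 1) ^ 2)]
    have h6 : 2 * (x + 2) * ((x - 1) ^ 2 * (2 * x + 1)) / (x ^ 2 + 4 * x + 1)
        ≤ 2 * (x + 2) * (x * Real.log x - x + 1) := by
      rw [div_le_iff₀ hden]
      have h7 := mul_le_mul_of_nonneg_left h2 (by linarith : (0:ℝ) ≤ 2 * (x + 2))
      nlinarith [h7]
    linarith
  · have hy1 : 1 ≤ 1 / x := by rw [le_div_iff₀ hx0]; linarith
    have hpade := wp_log_pade_upper hy1
    have hden : (0:ℝ) < 4 * (1 / x) + 2 := by positivity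
    have h2 : (-Real.log x) * (4 * (1 / x) + 2) ≤ (1 / x) ^ 2 + 4 * (1 / x) - 5 := by
      rw [← Real.log_inv, ← one_div]
      exact (le_div_iff₀ hden).mp hpade
    have h3 := mul_le_mul_of_nonneg_right h2 (sq_nonneg x)
    have hxne : x ≠ 0 := ne_of_gt hx0
    have e1 : (-Real.log x) * (4 * (1 / x) + 2) * x ^ 2 = -(Real.log x * (4 * x + 2 * x ^ 2)) := by
      field_simp
    have e2 : ((1 / x) ^ 2 + 4 * (1 / x) - 5) * x ^ 2 = 1 + 4 * x - 5 * x ^ 2 := by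
      field_simp
    rw [e1, e2] at h3
    nlinarith [h3]

open MeasureTheory

lemma wp_young {a b : ℝ} (ha : 0 ≤ a) : a * b ≤ a * Real.log a - a + Real.exp b := by
  rcases eq_or_lt_of_le ha with h0 | ha0
  · rw [← h0]; simp; positivity
  · have h1 : b - Real.log a + 1 ≤ Real.exp (b - Real.log a) := Real.add_one_le_exp _
    have h2 := mul_le_mul_of_nonneg_left h1 ha
    rw [Real.exp_sub, Real.exp_log ha0] at h2
    have h3 : a * (Real.exp b / a) = Real.exp b := by field_simp
    rw [h3] at h2
    nlinarith [h2]

lemma wp_xlogx {x : ℝ} (hx : 0 ≤ x) : x - 1 ≤ x * Real.log x := by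
  rcases eq_or_lt_of_le hx with h0 | hx0
  · rw [← h0]; simp
  · have h := Real.add_one_le_exp (-Real.log x)
    rw [Real.exp_neg, Real.exp_log hx0] at h
    have h2 := mul_le_mul_of_nonneg_left h hx0.le
    rw [mul_inv_cancel₀ (ne_of_gt hx0)] at h2
    nlinarith [h2]

open ProbabilityTheory Real


set_option maxHeartbeats 1000000 in
/-- **Weighted Pinsker inequality.**
The relative entropy `H(ν | ν')` is `∫ log (dν/dν') dν = ∫ llr ν ν' dν` when `ν ≪ ν'`
(and `+∞` otherwise).  With the convention that the right-hand side is `+∞` when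
`∫ e^{‖f‖²} dν' = +∞` or `H(ν | ν') = +∞` — in which case the claimed inequality is
trivially true — the statement reduces to the following one, in which both of those
quantities are assumed finite (expressed by the two integrability hypotheses). -/
theorem weighted_pinsker_inequality
    {α : Type*} [MeasurableSpace α] {d : ℕ}
    (ν ν' : Measure α) [IsProbabilityMeasure ν] [IsProbabilityMeasure ν']
    (hac : ν ≪ ν')
    (f : α → EuclideanSpace ℝ (Fin d)) (hf : Measurable f)
    (hfν : Integrable f ν) (hfν' : Integrable f ν')
    (hexp : Integrable (fun x => Real.exp (‖f x‖ ^ 2)) ν')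
    (hent : Integrable (llr ν ν') ν) :
    ‖(∫ x, f x ∂ν) - ∫ x, f x ∂ν'‖ ^ 2
      ≤ 2 * (1 + Real.log (∫ x, Real.exp (‖f x‖ ^ 2) ∂ν')) * ∫ x, llr ν ν' x ∂ν := by
  classical
  set Z : ℝ := ∫ x, Real.exp (‖f x‖ ^ 2) ∂ν' with hZdef
  set HH : ℝ := ∫ x, llr ν ν' x ∂ν with hHdef
  set L : ℝ := Real.log Z with hLdef
  set h : α → ℝ := fun x => (ν.rnDeriv ν' x).toReal with hhdef
  have hmeas : Measurable h := (Measure.measurable_rnDeriv ν ν').ennreal_toReal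
  have h0 : ∀ x, 0 ≤ h x := fun x => ENNReal.toReal_nonneg
  have hint_h : Integrable h ν' := Measure.integrable_toReal_rnDeriv
  have hint1 : ∫ x, h x ∂ν' = 1 := by
    simp only [hhdef]
    rw [Measure.integral_toReal_rnDeriv hac, probReal_univ]
  have hφmeas : Measurable (fun x => ‖f x‖ ^ 2) := by fun_prop
  have hφ0 : ∀ x, (0:ℝ) ≤ ‖f x‖ ^ 2 := fun x => sq_nonneg _
  have hZ1 : (1:ℝ) ≤ Z := by
    rw [hZdef]
    calc (1:ℝ) = ∫ _, (1:ℝ) ∂ν' := by simp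
    _ ≤ ∫ x, Real.exp (‖f x‖ ^ 2) ∂ν' := by
        refine integral_mono (integrable_const 1) hexp (fun x => ?_)
        have := Real.add_one_le_exp (‖f x‖ ^ 2)
        have := hφ0 x
        linarith
  have hZ0 : (0:ℝ) < Z := lt_of_lt_of_le one_pos hZ1
  have hL0 : 0 ≤ L := Real.log_nonneg hZ1
  have hint_hlogh : Integrable (fun x => h x * Real.log (h x)) ν' := by
    have := (integrable_rnDeriv_smul_iff (f := llr ν ν') hac).mpr hent
    simp only [smul_eq_mul] at this
    exact this
  have hHH : ∫ x, h x * Real.log (h x) ∂ν' = HH := by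
    rw [hHdef]
    have := integral_rnDeriv_smul (f := llr ν ν') hac
    simp only [smul_eq_mul] at this
    exact this
  have hH0 : 0 ≤ HH := by
    rw [← hHH]
    have h1 : ∫ x, (h x - 1) ∂ν' = 0 := by
      rw [integral_sub hint_h (integrable_const 1)]; simp [hint1]
    have h2 : ∫ x, (h x - 1) ∂ν' ≤ ∫ x, h x * Real.log (h x) ∂ν' :=
      integral_mono (hint_h.sub (integrable_const 1)) hint_hlogh (fun x => wp_xlogx (h0 x))
    linarith
  have hint_hφ : Integrable (fun x => h x * ‖f x‖ ^ 2) ν' := by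
    have hbnd : Integrable (fun x => |h x * Real.log (h x)| + Real.exp (‖f x‖ ^ 2)) ν' :=
      hint_hlogh.abs.add hexp
    refine Integrable.mono' hbnd ((hmeas.mul hφmeas).aestronglyMeasurable) ?_
    filter_upwards with x
    have hy := wp_young (b := ‖f x‖ ^ 2) (h0 x)
    have habs : h x * Real.log (h x) ≤ |h x * Real.log (h x)| := le_abs_self _
    rw [Real.norm_eq_abs, abs_of_nonneg (mul_nonneg (h0 x) (hφ0 x))]
    have := h0 x
    linarith
  have hDV : ∫ x, h x * ‖f x‖ ^ 2 ∂ν' ≤ HH + L := by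
    have hpt : ∀ x, h x * ‖f x‖ ^ 2 - L * h x
        ≤ h x * Real.log (h x) - h x + Real.exp (‖f x‖ ^ 2) / Z := by
      intro x
      have hy := wp_young (a := h x) (b := ‖f x‖ ^ 2 - L) (h0 x)
      rw [Real.exp_sub, hLdef, Real.exp_log hZ0] at hy
      nlinarith [hy]
    have hint_Lh : Integrable (fun x => L * h x) ν' := hint_h.const_mul L
    have hint_s1 : Integrable (fun x => h x * Real.log (h x) - h x) ν' := hint_hlogh.sub hint_h
    have hint_eZ : Integrable (fun x => Real.exp (‖f x‖ ^ 2) / Z) ν' := hexp.div_const Z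
    have hlhs : Integrable (fun x => h x * ‖f x‖ ^ 2 - L * h x) ν' := hint_hφ.sub hint_Lh
    have hrhs : Integrable (fun x => h x * Real.log (h x) - h x + Real.exp (‖f x‖ ^ 2) / Z) ν' :=
      hint_s1.add hint_eZ
    have hmono := integral_mono hlhs hrhs hpt
    rw [integral_sub hint_hφ hint_Lh,
      integral_add hint_s1 hint_eZ,
      integral_sub hint_hlogh hint_h, integral_div, integral_const_mul, hint1, hHH] at hmono
    rw [← hZdef, div_self (ne_of_gt hZ0)] at hmono
    linarith
  have hφν' : Integrable (fun x => ‖f x‖ ^ 2) ν' := by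
    refine hexp.mono' hφmeas.aestronglyMeasurable ?_
    filter_upwards with x
    rw [Real.norm_eq_abs, abs_of_nonneg (hφ0 x)]
    have := Real.add_one_le_exp (‖f x‖ ^ 2)
    linarith
  have hJ : ∫ x, ‖f x‖ ^ 2 ∂ν' ≤ L := by
    have hpt : ∀ x, ‖f x‖ ^ 2 - L ≤ Real.exp (‖f x‖ ^ 2) / Z - 1 := by
      intro x
      have := Real.add_one_le_exp (‖f x‖ ^ 2 - L)
      rw [Real.exp_sub, hLdef, Real.exp_log hZ0] at this
      linarith
    have hint_eZ : Integrable (fun x => Real.exp (‖f x‖ ^ 2) / Z) ν' := hexp.div_const Z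
    have hl1 : Integrable (fun x => ‖f x‖ ^ 2 - L) ν' := hφν'.sub (integrable_const L)
    have hl2 : Integrable (fun x => Real.exp (‖f x‖ ^ 2) / Z - 1) ν' :=
      hint_eZ.sub (integrable_const 1)
    have hmono := integral_mono hl1 hl2 hpt
    rw [integral_sub hφν' (integrable_const L),
      integral_sub hint_eZ (integrable_const 1), integral_div,
      integral_const, integral_const] at hmono
    simp only [probReal_univ, ENNReal.toReal_one, smul_eq_mul, one_mul] at hmono
    rw [← hZdef, div_self (ne_of_gt hZ0)] at hmono
    linarith
  -- Step A : bound the norm of the difference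
  have hint_hf : Integrable (fun x => h x • f x) ν' := by
    simp only [hhdef]
    exact (integrable_rnDeriv_smul_iff hac).mpr hfν
  have hA : ‖(∫ x, f x ∂ν) - ∫ x, f x ∂ν'‖ ≤ ∫ x, |h x - 1| * ‖f x‖ ∂ν' := by
    have h1 : ∫ x, f x ∂ν = ∫ x, h x • f x ∂ν' := by
      simp only [hhdef]
      exact (integral_rnDeriv_smul hac).symm
    rw [h1, ← integral_sub hint_hf hfν']
    refine le_trans (norm_integral_le_integral_norm _) (le_of_eq (integral_congr_ae ?_))
    filter_upwards with x
    rw [show h x • f x - f x = (h x - 1) • f x by rw [sub_smul, one_smul], norm_smul,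
      Real.norm_eq_abs]
  -- Cauchy-Schwarz
  have hd2 : ∀ x, (0:ℝ) < h x + 2 := fun x => by linarith [h0 x]
  set u : α → ℝ := fun x => |h x - 1| / Real.sqrt (h x + 2) with hudef
  set v : α → ℝ := fun x => Real.sqrt (h x + 2) * ‖f x‖ with hvdef
  have hs_pos : ∀ x, 0 < Real.sqrt (h x + 2) := fun x => Real.sqrt_pos.mpr (hd2 x)
  have huv : ∀ x, |h x - 1| * ‖f x‖ = u x * v x := by
    intro x
    simp only [hudef, hvdef]
    have hne : Real.sqrt (h x + 2) ≠ 0 := ne_of_gt (hs_pos x)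
    field_simp
  have hu2 : ∀ x, u x ^ 2 = (h x - 1) ^ 2 / (h x + 2) := by
    intro x
    simp only [hudef]
    rw [div_pow, sq_abs, Real.sq_sqrt (hd2 x).le]
  have hv2 : ∀ x, v x ^ 2 = (h x + 2) * ‖f x‖ ^ 2 := by
    intro x
    simp only [hvdef]
    rw [mul_pow, Real.sq_sqrt (hd2 x).le]
  set P : ℝ := ∫ x, (h x - 1) ^ 2 / (h x + 2) ∂ν' with hPdef
  set Q : ℝ := ∫ x, (h x + 2) * ‖f x‖ ^ 2 ∂ν' with hQdef
  have hint_P : Integrable (fun x => (h x - 1) ^ 2 / (h x + 2)) ν' := by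
    have hb : Integrable (fun x => h x + 1) ν' := hint_h.add (integrable_const 1)
    refine Integrable.mono' hb
      (((hmeas.sub measurable_const).pow_const 2).div
        (hmeas.add measurable_const)).aestronglyMeasurable ?_
    filter_upwards with x
    rw [Real.norm_eq_abs, abs_of_nonneg (div_nonneg (sq_nonneg _) (hd2 x).le),
      div_le_iff₀ (hd2 x)]
    nlinarith [h0 x]
  have hint_Q : Integrable (fun x => (h x + 2) * ‖f x‖ ^ 2) ν' := by
    have he : (fun x => (h x + 2) * ‖f x‖ ^ 2)
        = fun x => h x * ‖f x‖ ^ 2 + 2 * ‖f x‖ ^ 2 := by funext x; ring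
    have h2φ : Integrable (fun x => 2 * ‖f x‖ ^ 2) ν' := hφν'.const_mul 2
    rw [he]
    exact hint_hφ.add h2φ
  have hP0 : 0 ≤ P := integral_nonneg (fun x => div_nonneg (sq_nonneg _) (hd2 x).le)
  have hQ0 : 0 ≤ Q := integral_nonneg (fun x => mul_nonneg (hd2 x).le (hφ0 x))
  have humeas : Measurable u := ((hmeas.sub measurable_const).abs).div
    ((hmeas.add measurable_const).sqrt)
  have hvmeas : Measurable v := ((hmeas.add measurable_const).sqrt).mul hf.norm
  have hu_mem : MemLp u (ENNReal.ofReal 2) ν' := by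
    rw [show ENNReal.ofReal 2 = 2 by norm_num]
    refine (memLp_two_iff_integrable_sq humeas.aestronglyMeasurable).mpr ?_
    have he : (fun x => u x ^ 2) = fun x => (h x - 1) ^ 2 / (h x + 2) := funext hu2
    rw [he]; exact hint_P
  have hv_mem : MemLp v (ENNReal.ofReal 2) ν' := by
    rw [show ENNReal.ofReal 2 = 2 by norm_num]
    refine (memLp_two_iff_integrable_sq hvmeas.aestronglyMeasurable).mpr ?_
    have he : (fun x => v x ^ 2) = fun x => (h x + 2) * ‖f x‖ ^ 2 := funext hv2
    rw [he]; exact hint_Q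
  have hconj : Real.HolderConjugate 2 2 := by rw [Real.holderConjugate_iff]; norm_num
  have hCS0 := integral_mul_le_Lp_mul_Lq_of_nonneg (f := u) (g := v) hconj
    (Filter.Eventually.of_forall (fun x => div_nonneg (abs_nonneg _) (hs_pos x).le))
    (Filter.Eventually.of_forall (fun x => mul_nonneg (hs_pos x).le (norm_nonneg _)))
    hu_mem hv_mem
  simp only [Real.rpow_two] at hCS0
  simp only [hu2, hv2] at hCS0
  rw [← hPdef, ← hQdef] at hCS0
  -- hCS0 : ∫ u * v ≤ P ^ (1/2) * Q ^ (1/2)  (with possibly cast exponents)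
  have hA2 : (∫ x, |h x - 1| * ‖f x‖ ∂ν') ^ 2 ≤ P * Q := by
    have hAnn : 0 ≤ ∫ x, u x * v x ∂ν' :=
      integral_nonneg (fun x => mul_nonneg (div_nonneg (abs_nonneg _) (hs_pos x).le)
        (mul_nonneg (hs_pos x).le (norm_nonneg _)))
    have he : (∫ x, |h x - 1| * ‖f x‖ ∂ν') = ∫ x, u x * v x ∂ν' :=
      integral_congr_ae (Filter.Eventually.of_forall huv)
    rw [he]
    have hsq : ∀ (a : ℝ), 0 ≤ a → (a ^ ((1:ℝ)/(2:ℝ))) ^ 2 = a := by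
      intro a ha
      rw [← Real.rpow_natCast (a ^ ((1:ℝ)/(2:ℝ))) 2, ← Real.rpow_mul ha]
      norm_num
    calc (∫ x, u x * v x ∂ν') ^ 2
        ≤ (P ^ ((1:ℝ)/(2:ℝ)) * Q ^ ((1:ℝ)/(2:ℝ))) ^ 2 := by
          exact pow_le_pow_left₀ hAnn hCS0 2
      _ = P * Q := by rw [mul_pow, hsq P hP0, hsq Q hQ0]
  -- bounds on P and Q
  have hP1 : P ≤ 2/3 * HH := by
    have hint_s1 : Integrable (fun x => h x * Real.log (h x) - h x) ν' := hint_hlogh.sub hint_h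
    have hint_s2 : Integrable (fun x => h x * Real.log (h x) - h x + 1) ν' :=
      hint_s1.add (integrable_const 1)
    have hrhs : Integrable (fun x => 2/3 * (h x * Real.log (h x) - h x + 1)) ν' :=
      hint_s2.const_mul (2/3)
    have hmono := integral_mono hint_P hrhs (fun x => by
      rw [div_le_iff₀ (hd2 x)]
      nlinarith [wp_key_pointwise (h0 x)])
    rw [integral_const_mul, integral_add hint_s1 (integrable_const 1),
      integral_sub hint_hlogh hint_h, integral_const, hint1, hHH] at hmono
    simp only [probReal_univ, ENNReal.toReal_one, smul_eq_mul, one_mul] at hmono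
    rw [← hPdef] at hmono
    linarith
  have hP2 : P ≤ 2 := by
    have hrhs2 : Integrable (fun x => h x + 1) ν' := hint_h.add (integrable_const 1)
    have hmono := integral_mono hint_P hrhs2 (fun x => by
      rw [div_le_iff₀ (hd2 x)]
      nlinarith [h0 x])
    rw [integral_add hint_h (integrable_const 1), integral_const, hint1] at hmono
    simp only [probReal_univ, ENNReal.toReal_one, smul_eq_mul, one_mul] at hmono
    rw [← hPdef] at hmono
    linarith
  have hQb : Q ≤ HH + 3 * L := by
    have he : (fun x => (h x + 2) * ‖f x‖ ^ 2)
        = fun x => h x * ‖f x‖ ^ 2 + 2 * ‖f x‖ ^ 2 := by funext x; ring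
    have h2φ : Integrable (fun x => 2 * ‖f x‖ ^ 2) ν' := hφν'.const_mul 2
    rw [hQdef, he, integral_add hint_hφ h2φ, integral_const_mul]
    linarith
  -- conclusion
  have hD2 : ‖(∫ x, f x ∂ν) - ∫ x, f x ∂ν'‖ ^ 2 ≤ P * Q :=
    le_trans (pow_le_pow_left₀ (norm_nonneg _) hA 2) hA2
  have hfinal : P * Q ≤ 2 * (1 + L) * HH := by
    rcases le_or_gt HH 3 with hc | hc
    · calc P * Q ≤ (2/3 * HH) * Q := mul_le_mul_of_nonneg_right hP1 hQ0
        _ ≤ (2/3 * HH) * (HH + 3 * L) := by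
            refine mul_le_mul_of_nonneg_left hQb (by linarith)
        _ ≤ (2/3 * HH) * (3 + 3 * L) := by
            refine mul_le_mul_of_nonneg_left (by linarith) (by linarith)
        _ = 2 * (1 + L) * HH := by ring
    · calc P * Q ≤ 2 * Q := mul_le_mul_of_nonneg_right hP2 hQ0
        _ ≤ 2 * (HH + 3 * L) := by linarith
        _ ≤ 2 * (HH + L * HH) := by
            have h6 := mul_le_mul_of_nonneg_left hc.le hL0
            linarith
        _ = 2 * (1 + L) * HH := by ring
  linarith
end

section
/- Let d ≥ 1, T > 0, and let p, q ∈ (2,∞) satisfy d/p + 2/q < 1. There exists a constant C depending only on d, p, q, T such that for every measurable f : [0,T] × ℝ^d → ℝ with ‖f‖_{L^q_t L^p_x} < ∞ and every t ∈ (0,T], ∫_0^t ∫_{ℝ^d} |f(s,x)|² (2πs)^{−d/2} e^{−‖x‖²/(2s)} dx ds ≤ C t^{1 − 2/q − d/p} ‖f‖²_{L^q_t L^p_x}. -/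
open MeasureTheory Set
open scoped ENNReal NNReal

/-- The mixed norm `‖f‖_{L^q_t L^p_x} = (∫_0^T ‖f(t,·)‖_{L^p(ℝ^d)}^q dt)^{1/q}`. -/
noncomputable def mixedNorm {E : Type*} [NormedAddCommGroup E] {d : ℕ}
    (T p q : ℝ) (f : ℝ → EuclideanSpace ℝ (Fin d) → E) : ℝ≥0∞ :=
  (∫⁻ t in Ioc (0:ℝ) T,
    ((∫⁻ x, (‖f t x‖₊ : ℝ≥0∞) ^ p) ^ (1 / p)) ^ q) ^ (1 / q)

lemma gauss_integrable (d : ℕ) {b : ℝ} (hb : 0 < b) :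
    Integrable (fun v : EuclideanSpace ℝ (Fin d) => Real.exp (-(b * ‖v‖^2))) := by
  have h := (GaussianFourier.integrable_cexp_neg_mul_sq_norm_add
      (V := EuclideanSpace ℝ (Fin d)) (b := (b:ℂ)) (by simpa using hb) 0 0).norm
  refine h.congr (Filter.Eventually.of_forall fun v => ?_)
  simp [Complex.norm_exp, ← Complex.ofReal_pow]

lemma gauss_lintegral (d : ℕ) {b : ℝ} (hb : 0 < b) :
    ∫⁻ x : EuclideanSpace ℝ (Fin d), ENNReal.ofReal (Real.exp (-(b * ‖x‖^2)))
      = ENNReal.ofReal ((Real.pi / b) ^ ((d:ℝ)/2)) := by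
  rw [← ofReal_integral_eq_lintegral_ofReal (gauss_integrable d hb)
      (Filter.Eventually.of_forall fun x => (Real.exp_pos _).le)]
  congr 1
  have h := GaussianFourier.integral_rexp_neg_mul_sq_norm (V := EuclideanSpace ℝ (Fin d)) hb
  simpa [finrank_euclideanSpace_fin, neg_mul] using h

lemma base_rpow (d : ℕ) {p s : ℝ} (hp : 2 < p) (hs : 0 < s) :
    ((2*Real.pi*s) ^ (-(d:ℝ)/2 * (p/(p-2))) * (Real.pi / ((p/(p-2))/(2*s))) ^ ((d:ℝ)/2)) ^ (1/(p/(p-2)))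
      = ((2*Real.pi) ^ (-(d:ℝ)/p) * ((p/(p-2))⁻¹) ^ ((d:ℝ)/2 * (1/(p/(p-2))))) * s ^ (-(d:ℝ)/p) := by
  have hp0 : (0:ℝ) < p := by linarith
  have hp2 : (0:ℝ) < p - 2 := by linarith
  set r := p/(p-2) with hrdef
  have hr : 0 < r := div_pos hp0 hp2
  have hA : (0:ℝ) < 2*Real.pi := by positivity
  have hAs : (0:ℝ) < 2*Real.pi*s := by positivity
  have h1 : Real.pi / (r/(2*s)) = (2*Real.pi*s) * r⁻¹ := by field_simp
  rw [h1, Real.mul_rpow hAs.le (inv_nonneg.mpr hr.le), ← mul_assoc,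
      ← Real.rpow_add hAs,
      Real.mul_rpow (by positivity) (by positivity),
      ← Real.rpow_mul hAs.le, ← Real.rpow_mul (by positivity)]
  have he : (-(d:ℝ)/2 * r + (d:ℝ)/2) * (1/r) = -(d:ℝ)/p := by
    rw [hrdef]; field_simp; ring
  rw [he, Real.mul_rpow hA.le hs.le]
  ring

lemma kernel_lr (d : ℕ) {p s : ℝ} (hp : 2 < p) (hs : 0 < s) :
    (∫⁻ x : EuclideanSpace ℝ (Fin d),
        (ENNReal.ofReal ((2*Real.pi*s) ^ (-(d:ℝ)/2) * Real.exp (-‖x‖^2/(2*s)))) ^ (p/(p-2)))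
        ^ (1/(p/(p-2)))
      = ENNReal.ofReal
          (((2*Real.pi) ^ (-(d:ℝ)/p) * ((p/(p-2))⁻¹) ^ ((d:ℝ)/2 * (1/(p/(p-2))))) * s ^ (-(d:ℝ)/p)) := by
  have hp0 : (0:ℝ) < p := by linarith
  have hp2 : (0:ℝ) < p - 2 := by linarith
  set r := p/(p-2) with hrdef
  have hr : 0 < r := div_pos hp0 hp2
  have hAs : (0:ℝ) < 2*Real.pi*s := by positivity
  have hc : (0:ℝ) < (2*Real.pi*s) ^ (-(d:ℝ)/2) := Real.rpow_pos_of_pos hAs _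
  have hb : (0:ℝ) < r/(2*s) := by positivity
  have hpt : ∀ x : EuclideanSpace ℝ (Fin d),
      (ENNReal.ofReal ((2*Real.pi*s) ^ (-(d:ℝ)/2) * Real.exp (-‖x‖^2/(2*s)))) ^ r
        = ENNReal.ofReal ((2*Real.pi*s) ^ (-(d:ℝ)/2 * r))
          * ENNReal.ofReal (Real.exp (-(r/(2*s) * ‖x‖^2))) := by
    intro x
    rw [ENNReal.ofReal_rpow_of_pos (by positivity),
        Real.mul_rpow hc.le (Real.exp_pos _).le,
        ← Real.rpow_mul hAs.le, ← Real.exp_mul,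
        ENNReal.ofReal_mul (by positivity)]
    congr 2
    ring
  simp_rw [hpt]
  rw [lintegral_const_mul' _ _ ENNReal.ofReal_ne_top, gauss_lintegral d hb,
      ← ENNReal.ofReal_mul (by positivity),
      ENNReal.ofReal_rpow_of_pos (by positivity)]
  congr 1
  exact base_rpow d hp hs

lemma time_integral {t a : ℝ} (ht : 0 < t) (ha1 : a < 1) :
    ∫⁻ s in Ioc (0:ℝ) t, ENNReal.ofReal (s ^ (-a)) = ENNReal.ofReal (t^(1-a) / (1-a)) := by
  have hi : IntegrableOn (fun s : ℝ => s ^ (-a)) (Ioc 0 t) := by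
    have h := intervalIntegral.intervalIntegrable_rpow' (a := 0) (b := t) (r := -a) (by linarith)
    rwa [intervalIntegrable_iff_integrableOn_Ioc_of_le ht.le] at h
  rw [← ofReal_integral_eq_lintegral_ofReal hi
      ((ae_restrict_iff' measurableSet_Ioc).mpr
        (Filter.Eventually.of_forall fun s hs => Real.rpow_nonneg hs.1.le _))]
  congr 1
  rw [← intervalIntegral.integral_of_le ht.le,
      integral_rpow (Or.inl (by linarith)),
      Real.zero_rpow (by intro h; linarith : -a + 1 ≠ 0)]
  have h2 : -a + 1 = 1 - a := by ring
  rw [h2, sub_zero]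

/-- **The analytic core of Krylov's estimate**: for `d/p + 2/q < 1` (with `p,q ∈ (2,∞)`)
there is `C = C(d,p,q,T)` such that for every `f` with finite mixed norm and `t ∈ (0,T]`,
`∫_0^t ∫_{ℝ^d} |f(s,x)|² (2πs)^{−d/2} e^{−‖x‖²/(2s)} dx ds
  ≤ C t^{1 − 2/q − d/p} ‖f‖²_{L^q_t L^p_x}`. -/
theorem krylov_heat_kernel_estimate
    (d : ℕ) (hd : 1 ≤ d) (T p q : ℝ) (hT : 0 < T)
    (hp : 2 < p) (hq : 2 < q) (hpq : (d : ℝ) / p + 2 / q < 1) :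
    ∃ C : ℝ, 0 < C ∧
      ∀ (f : ℝ → EuclideanSpace ℝ (Fin d) → ℝ),
        Measurable (Function.uncurry f) →
        mixedNorm T p q f < ⊤ →
        ∀ t ∈ Ioc (0:ℝ) T,
          (∫⁻ s in Ioc (0:ℝ) t, ∫⁻ x, ENNReal.ofReal
              ((f s x) ^ 2 *
                ((2 * Real.pi * s) ^ (-(d : ℝ) / 2) *
                  Real.exp (-‖x‖ ^ 2 / (2 * s)))))
            ≤ ENNReal.ofReal (C * t ^ (1 - 2 / q - (d : ℝ) / p)) *
                (mixedNorm T p q f) ^ 2 := by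
  have hp0 : (0:ℝ) < p := by linarith
  have hq0 : (0:ℝ) < q := by linarith
  have hp2 : (0:ℝ) < p - 2 := by linarith
  have hq2 : (0:ℝ) < q - 2 := by linarith
  set r := p/(p-2) with hrdef
  set q2 := q/(q-2) with hq2def
  have hr : 0 < r := div_pos hp0 hp2
  have hq2p : 0 < q2 := div_pos hq0 hq2
  set cG : ℝ := (2*Real.pi) ^ (-(d:ℝ)/p) * (r⁻¹) ^ ((d:ℝ)/2 * (1/r)) with hcGdef
  have hcG : 0 < cG := by positivity
  set a : ℝ := ((d:ℝ)/p) * q2 with hadef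
  have hdp_lt : (d:ℝ)/p < (q-2)/q := by
    have h1 : (q-2)/q = 1 - 2/q := by
      rw [sub_div, div_self hq0.ne']
    linarith
  have ha0 : 0 ≤ a := by positivity
  have ha1 : a < 1 := by
    have h1 := mul_lt_mul_of_pos_right hdp_lt hq2p
    have h2 : (q-2)/q * q2 = 1 := by
      rw [hq2def]; field_simp
    rw [hadef]; rw [h2] at h1; exact h1
  have h1a : 0 < 1 - a := by linarith
  have hconj1 : (p/2).HolderConjugate r := by
    refine Real.holderConjugate_iff.mpr ⟨?_, ?_⟩
    · linarith
    · rw [hrdef]; field_simp; ring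
  have hconj2 : (q/2).HolderConjugate q2 := by
    refine Real.holderConjugate_iff.mpr ⟨?_, ?_⟩
    · linarith
    · rw [hq2def]; field_simp; ring
  refine ⟨cG / (1-a) ^ ((q-2)/q), by positivity, ?_⟩
  intro f hmf hnorm t ht
  have ht0 : 0 < t := ht.1
  set Np : ℝ → ℝ≥0∞ := fun s => (∫⁻ x, ((‖f s x‖₊ : ℝ≥0∞)) ^ p) ^ (1/p) with hNpdef
  have hNpm : Measurable Np := by
    apply ENNReal.continuous_rpow_const.measurable.comp
    apply Measurable.lintegral_prod_right'
      (f := fun z : ℝ × EuclideanSpace ℝ (Fin d) => ((‖f z.1 z.2‖₊ : ℝ≥0∞)) ^ p)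
    exact ENNReal.continuous_rpow_const.measurable.comp hmf.nnnorm.coe_nnreal_ennreal
  set W : ℝ → ℝ≥0∞ := fun s => (ENNReal.ofReal s) ^ (-(d:ℝ)/p) with hWdef
  have hWm : Measurable W :=
    ENNReal.continuous_rpow_const.measurable.comp ENNReal.measurable_ofReal
  -- pointwise rewrite of the integrand
  have hof : ∀ y : ℝ, ENNReal.ofReal (y^2) = (‖y‖₊ : ℝ≥0∞) ^ (2:ℝ) := by
    intro y
    rw [show (2:ℝ) = ((2:ℕ):ℝ) by norm_num, ENNReal.rpow_natCast,
        ← enorm_eq_nnnorm, Real.enorm_eq_ofReal_abs, ← ENNReal.ofReal_pow (abs_nonneg y), sq_abs]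
  have hptw : ∀ s : ℝ, ∀ x : EuclideanSpace ℝ (Fin d),
      ENNReal.ofReal ((f s x)^2 * ((2*Real.pi*s) ^ (-(d:ℝ)/2) * Real.exp (-‖x‖^2/(2*s))))
        = (‖f s x‖₊ : ℝ≥0∞) ^ (2:ℝ)
          * ENNReal.ofReal ((2*Real.pi*s) ^ (-(d:ℝ)/2) * Real.exp (-‖x‖^2/(2*s))) := by
    intro s x
    rw [ENNReal.ofReal_mul (sq_nonneg _), hof]
  -- spatial Hölder
  have hspace : ∀ s ∈ Ioc (0:ℝ) t,
      (∫⁻ x, (‖f s x‖₊ : ℝ≥0∞) ^ (2:ℝ)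
          * ENNReal.ofReal ((2*Real.pi*s) ^ (-(d:ℝ)/2) * Real.exp (-‖x‖^2/(2*s))))
        ≤ Np s ^ (2:ℝ) * (ENNReal.ofReal cG * W s) := by
    intro s hs
    have hgm : Measurable fun x : EuclideanSpace ℝ (Fin d) => (‖f s x‖₊ : ℝ≥0∞) ^ (2:ℝ) :=
      ENNReal.continuous_rpow_const.measurable.comp hmf.of_uncurry_left.nnnorm.coe_nnreal_ennreal
    have hkm : Measurable fun x : EuclideanSpace ℝ (Fin d) =>
        ENNReal.ofReal ((2*Real.pi*s) ^ (-(d:ℝ)/2) * Real.exp (-‖x‖^2/(2*s))) := by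
      fun_prop
    have h := ENNReal.lintegral_mul_le_Lp_mul_Lq (volume : Measure (EuclideanSpace ℝ (Fin d)))
      hconj1 hgm.aemeasurable hkm.aemeasurable
    simp only [Pi.mul_apply] at h
    refine h.trans (le_of_eq ?_)
    have e1 : ∀ x : EuclideanSpace ℝ (Fin d),
        ((‖f s x‖₊ : ℝ≥0∞) ^ (2:ℝ)) ^ (p/2) = (‖f s x‖₊ : ℝ≥0∞) ^ p := by
      intro x
      rw [← ENNReal.rpow_mul]
      congr 1
      ring
    simp_rw [e1]
    have e2 : (∫⁻ x, (‖f s x‖₊ : ℝ≥0∞) ^ p) ^ (1/(p/2)) = Np s ^ (2:ℝ) := by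
      simp only [hNpdef]
      rw [← ENNReal.rpow_mul]
      congr 1
      field_simp
    rw [e2, kernel_lr d hp hs.1, ENNReal.ofReal_mul hcG.le]
    simp only [hWdef]
    rw [ENNReal.ofReal_rpow_of_pos hs.1]
  -- rewrite and bound the double integral
  calc
    (∫⁻ s in Ioc (0:ℝ) t, ∫⁻ x, ENNReal.ofReal
        ((f s x) ^ 2 * ((2 * Real.pi * s) ^ (-(d : ℝ) / 2) * Real.exp (-‖x‖ ^ 2 / (2 * s)))))
      = ∫⁻ s in Ioc (0:ℝ) t, ∫⁻ x, (‖f s x‖₊ : ℝ≥0∞) ^ (2:ℝ)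
          * ENNReal.ofReal ((2*Real.pi*s) ^ (-(d:ℝ)/2) * Real.exp (-‖x‖^2/(2*s))) := by
        simp_rw [hptw]
    _ ≤ ∫⁻ s in Ioc (0:ℝ) t, Np s ^ (2:ℝ) * (ENNReal.ofReal cG * W s) := by
        refine lintegral_mono_ae ?_
        exact (ae_restrict_iff' measurableSet_Ioc).mpr (Filter.Eventually.of_forall hspace)
    _ = ENNReal.ofReal cG * ∫⁻ s in Ioc (0:ℝ) t, Np s ^ (2:ℝ) * W s := by
        have hcomm : ∀ s : ℝ, Np s ^ (2:ℝ) * (ENNReal.ofReal cG * W s)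
            = ENNReal.ofReal cG * (Np s ^ (2:ℝ) * W s) := fun s => by ring
        simp_rw [hcomm]
        exact lintegral_const_mul' _ _ ENNReal.ofReal_ne_top
    _ ≤ ENNReal.ofReal cG * ((mixedNorm T p q f) ^ (2:ℝ)
          * ENNReal.ofReal ((t^(1-a)/(1-a)) ^ (1/q2))) := by
        gcongr
        have h := ENNReal.lintegral_mul_le_Lp_mul_Lq (volume.restrict (Ioc (0:ℝ) t))
          hconj2 (f := fun s => Np s ^ (2:ℝ)) (g := W)
          ((ENNReal.continuous_rpow_const.measurable.comp hNpm).aemeasurable)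
          hWm.aemeasurable
        simp only [Pi.mul_apply] at h
        refine h.trans ?_
        have e1 : ∀ s : ℝ, (Np s ^ (2:ℝ)) ^ (q/2) = Np s ^ q := by
          intro s
          rw [← ENNReal.rpow_mul]
          congr 1
          ring
        simp_rw [e1]
        have e2' : ∀ s ∈ Ioc (0:ℝ) t, (W s) ^ q2 = ENNReal.ofReal (s ^ (-a)) := by
          intro s hs
          simp only [hWdef]
          rw [← ENNReal.rpow_mul, ENNReal.ofReal_rpow_of_pos hs.1]
          congr 1
          rw [hadef]; ring
        have e2 : ∫⁻ s in Ioc (0:ℝ) t, (W s) ^ q2 = ENNReal.ofReal (t^(1-a)/(1-a)) := by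
          rw [setLIntegral_congr_fun measurableSet_Ioc e2',
            time_integral ht0 ha1]
        rw [e2]
        refine mul_le_mul ?_ (le_of_eq ?_) (by positivity) (by positivity)
        · have hmono : (∫⁻ s in Ioc (0:ℝ) t, Np s ^ q) ≤ ∫⁻ s in Ioc (0:ℝ) T, Np s ^ q :=
            lintegral_mono_set (Ioc_subset_Ioc_right ht.2)
          have hmn : mixedNorm T p q f = (∫⁻ s in Ioc (0:ℝ) T, Np s ^ q) ^ (1/q) := rfl
          rw [hmn, ← ENNReal.rpow_mul]
          have he : 1/(q/2) = 1/q * 2 := by field_simp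
          rw [he]
          exact ENNReal.rpow_le_rpow hmono (by positivity)
        · rw [ENNReal.ofReal_rpow_of_pos (div_pos (Real.rpow_pos_of_pos ht0 _) h1a)]
    _ ≤ ENNReal.ofReal (cG / (1-a) ^ ((q-2)/q) * t ^ (1 - 2/q - (d:ℝ)/p)) *
          (mixedNorm T p q f) ^ 2 := by
        refine le_of_eq ?_
        have h12 : 1/q2 = (q-2)/q := by rw [hq2def, one_div_div]
        have hβ : (1-a)*((q-2)/q) = 1 - 2/q - (d:ℝ)/p := by
          rw [hadef, hq2def]; field_simp
        have hreal : cG * (t^(1-a)/(1-a)) ^ (1/q2)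
            = cG/(1-a) ^ ((q-2)/q) * t ^ (1 - 2/q - (d:ℝ)/p) := by
          rw [h12, Real.div_rpow (Real.rpow_nonneg ht0.le _) h1a.le,
            ← Real.rpow_mul ht0.le, hβ]
          ring
        have hM : (mixedNorm T p q f) ^ (2:ℝ) = (mixedNorm T p q f) ^ 2 := by
          rw [← ENNReal.rpow_natCast]; norm_num
        rw [hM, mul_comm ((mixedNorm T p q f) ^ 2), ← mul_assoc,
            ← ENNReal.ofReal_mul hcG.le, hreal]
end

section
/- Let T > 0, α ∈ (0,1], β > 0, δ ∈ (0,1], H ∈ (0,1], C, C_H, L ≥ 0, and let b : [0,T] × ℝ^d × ℝ^d → ℝ^m satisfy ‖b(t,x,x') − b(s,y,y')‖ ≤ C (‖x−y‖^α + ‖x'−y'‖^α + |t−s|^β) for all s,t ∈ [0,T] and x,y,x',y' ∈ ℝ^d. Let (μ_t)_{t∈[0,T]} be a family of Borel probability measures on ℝ^d such that for all 0 ≤ s ≤ t ≤ T there exists a coupling π_{s,t} of μ_s and μ_t with ∫ ‖z − z'‖ dπ_{s,t}(z,z') ≤ C_H (t−s)^H, and assume z ↦ b(t, Y_t, z) is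 μ_t-integrable for each t. Let Y : [0,T] → ℝ^d satisfy ‖Y_t − Y_s‖ ≤ L |t−s|^δ. Then for every γ > 0 with γ ≤ min(β, αδ, αH), the function f(t) = ∫_{ℝ^d} b(t, Y_t, z) dμ_t(z) satisfies ‖f(t) − f(s)‖ ≤ C' (t−s)^γ for all 0 ≤ s ≤ t ≤ T, where C' depends only on C, C_H, L, T, α, β, δ, H, γ. -/
open MeasureTheory Set

private lemma aux_rpow_le_one_add {α a : ℝ} (hα0 : 0 < α) (hα1 : α ≤ 1) (ha : 0 ≤ a) :
    a ^ α ≤ 1 + a := by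
  rcases le_or_gt a 1 with h | h
  · have := Real.rpow_le_one ha h hα0.le
    linarith
  · have h2 : a ^ α ≤ a ^ (1 : ℝ) := Real.rpow_le_rpow_of_exponent_le h.le hα1
    rw [Real.rpow_one] at h2
    linarith

private lemma aux_rpow_le_eps {α a ε : ℝ} (hα0 : 0 < α) (hα1 : α ≤ 1) (ha : 0 ≤ a)
    (hε : 0 < ε) : a ^ α ≤ ε ^ α + ε ^ (α - 1) * a := by
  rcases le_or_gt a ε with h | h
  · have h1 : a ^ α ≤ ε ^ α := Real.rpow_le_rpow ha h hα0.le
    have h2 : 0 ≤ ε ^ (α - 1) * a := mul_nonneg (Real.rpow_nonneg hε.le _) ha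
    linarith
  · have ha0 : 0 < a := hε.trans h
    have h1 : a ^ α = a ^ (α - 1) * a := by
      rw [← Real.rpow_add_one ha0.ne' (α - 1)]
      ring_nf
    have h2 : a ^ (α - 1) ≤ ε ^ (α - 1) :=
      Real.rpow_le_rpow_of_nonpos hε h.le (by linarith)
    have h3 : 0 ≤ ε ^ α := Real.rpow_nonneg hε.le _
    nlinarith

/-- Time regularity of `t ↦ ∫ b(t, Y_t, z) dμ_t(z)`: if `b` is `α`-Hölder in space and
`β`-Hölder in time, the marginals `(μ_t)` admit couplings with transport cost
`≤ C_H (t−s)^H`, and `Y` is `δ`-Hölder with constant `L`, then for every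
`γ ≤ min(β, αδ, αH)` the drift is `γ`-Hölder with a constant `C'` depending only on
`C, C_H, L, T, α, β, δ, H, γ`. -/
theorem drift_time_regularity
    (d m : ℕ) (T α β δ H C CH L γ : ℝ)
    (hT : 0 < T) (hα : α ∈ Ioc (0:ℝ) 1) (hβ : 0 < β) (hδ : δ ∈ Ioc (0:ℝ) 1)
    (hH : H ∈ Ioc (0:ℝ) 1) (hC : 0 ≤ C) (hCH : 0 ≤ CH) (hL : 0 ≤ L)
    (hγ0 : 0 < γ) (hγβ : γ ≤ β) (hγδ : γ ≤ α * δ) (hγH : γ ≤ α * H) :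
    ∃ C' : ℝ,
      ∀ (b : ℝ → EuclideanSpace ℝ (Fin d) → EuclideanSpace ℝ (Fin d) →
          EuclideanSpace ℝ (Fin m)),
        (∀ s ∈ Icc (0:ℝ) T, ∀ t ∈ Icc (0:ℝ) T,
          ∀ (x y x' y' : EuclideanSpace ℝ (Fin d)),
            ‖b t x x' - b s y y'‖
              ≤ C * (‖x - y‖ ^ α + ‖x' - y'‖ ^ α + |t - s| ^ β)) →
      ∀ (μ : ℝ → Measure (EuclideanSpace ℝ (Fin d))),
        (∀ t, IsProbabilityMeasure (μ t)) →
        (∀ s t, 0 ≤ s → s ≤ t → t ≤ T →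
          ∃ π : Measure (EuclideanSpace ℝ (Fin d) × EuclideanSpace ℝ (Fin d)),
            IsProbabilityMeasure π ∧
            π.map Prod.fst = μ s ∧ π.map Prod.snd = μ t ∧
            Integrable (fun p => ‖p.1 - p.2‖) π ∧
            ∫ p, ‖p.1 - p.2‖ ∂π ≤ CH * (t - s) ^ H) →
      ∀ (Y : ℝ → EuclideanSpace ℝ (Fin d)),
        (∀ s ∈ Icc (0:ℝ) T, ∀ t ∈ Icc (0:ℝ) T, ‖Y t - Y s‖ ≤ L * |t - s| ^ δ) →
        (∀ t ∈ Icc (0:ℝ) T, Integrable (fun z => b t (Y t) z) (μ t)) →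
        ∀ s ∈ Icc (0:ℝ) T, ∀ t ∈ Icc (0:ℝ) T, s ≤ t →
          ‖(∫ z, b t (Y t) z ∂(μ t)) - ∫ z, b s (Y s) z ∂(μ s)‖
            ≤ C' * (t - s) ^ γ := by
  obtain ⟨hα0, hα1⟩ := hα
  obtain ⟨hδ0, hδ1⟩ := hδ
  obtain ⟨hH0, hH1⟩ := hH
  set K : ℝ := max T 1 with hKdef
  have hK1 : (1:ℝ) ≤ K := le_max_right T 1
  have hK0 : 0 < K := lt_of_lt_of_le one_pos hK1
  refine ⟨C * (L ^ α + CH + 2) * K ^ (max β 1), ?_⟩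
  intro b hb μ hμprob hcoup Y hY hInt s hs t ht hst
  rcases eq_or_lt_of_le hst with rfl | hlt
  · simp [Real.zero_rpow hγ0.ne']
  have ht0 : 0 < t - s := sub_pos.2 hlt
  have htsT : t - s ≤ K := le_trans (by linarith [hs.1, ht.2]) (le_max_left T 1)
  obtain ⟨π, hπprob, hfst, hsnd, hIntW, hW⟩ := hcoup s t hs.1 hst ht.2
  haveI := hπprob
  haveI := hμprob s
  haveI := hμprob t
  -- transfer integrals to the coupling
  have hms : AEStronglyMeasurable (fun z => b s (Y s) z) (μ s) := (hInt s hs).1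
  have hmt : AEStronglyMeasurable (fun z => b t (Y t) z) (μ t) := (hInt t ht).1
  have hints : Integrable (fun p : EuclideanSpace ℝ (Fin d) × EuclideanSpace ℝ (Fin d) =>
      b s (Y s) p.1) π := by
    have h := hInt s hs
    rw [← hfst] at h
    exact (integrable_map_measure h.1 measurable_fst.aemeasurable).mp h
  have hintt : Integrable (fun p : EuclideanSpace ℝ (Fin d) × EuclideanSpace ℝ (Fin d) =>
      b t (Y t) p.2) π := by
    have h := hInt t ht
    rw [← hsnd] at h
    exact (integrable_map_measure h.1 measurable_snd.aemeasurable).mp h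
  have heqs : ∫ z, b s (Y s) z ∂(μ s) = ∫ p, b s (Y s) p.1 ∂π := by
    rw [← hfst]
    exact integral_map measurable_fst.aemeasurable (by rw [hfst]; exact hms)
  have heqt : ∫ z, b t (Y t) z ∂(μ t) = ∫ p, b t (Y t) p.2 ∂π := by
    rw [← hsnd]
    exact integral_map measurable_snd.aemeasurable (by rw [hsnd]; exact hmt)
  -- integrability of the pointwise bound
  have hrmeas : AEStronglyMeasurable
      (fun p : EuclideanSpace ℝ (Fin d) × EuclideanSpace ℝ (Fin d) => ‖p.1 - p.2‖ ^ α) π := by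
    exact (((continuous_fst.sub continuous_snd).norm).rpow_const
      (fun x => Or.inr hα0.le)).aestronglyMeasurable
  have hrint : Integrable
      (fun p : EuclideanSpace ℝ (Fin d) × EuclideanSpace ℝ (Fin d) => ‖p.1 - p.2‖ ^ α) π := by
    refine Integrable.mono' ((integrable_const 1).add hIntW) hrmeas ?_
    filter_upwards with p
    rw [Real.norm_eq_abs, abs_of_nonneg (Real.rpow_nonneg (norm_nonneg _) _)]
    exact aux_rpow_le_one_add hα0 hα1 (norm_nonneg _)
  set A : ℝ := ‖Y t - Y s‖ ^ α with hAdef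
  set c : ℝ := |t - s| ^ β with hcdef
  have hbint : Integrable
      (fun p : EuclideanSpace ℝ (Fin d) × EuclideanSpace ℝ (Fin d) =>
        C * (A + ‖p.1 - p.2‖ ^ α + c)) π :=
    ((((integrable_const A).add hrint).add (integrable_const c)).const_mul C)
  -- main bound through the coupling
  set I : ℝ := ∫ p, ‖p.1 - p.2‖ ^ α ∂π with hIdef
  have key : ‖(∫ z, b t (Y t) z ∂(μ t)) - ∫ z, b s (Y s) z ∂(μ s)‖
      ≤ C * (A + I + c) := by
    rw [heqs, heqt, ← integral_sub hintt hints]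
    refine (norm_integral_le_integral_norm _).trans ?_
    have hmono : ∫ p, ‖b t (Y t) p.2 - b s (Y s) p.1‖ ∂π
        ≤ ∫ p, C * (A + ‖p.1 - p.2‖ ^ α + c) ∂π := by
      refine integral_mono_of_nonneg ?_ hbint ?_
      · filter_upwards with p using norm_nonneg _
      · filter_upwards with p
        have := hb s hs t ht (Y t) (Y s) p.2 p.1
        rwa [norm_sub_rev p.2 p.1] at this
    refine hmono.trans (le_of_eq ?_)
    have hsum : Integrable (fun p : EuclideanSpace ℝ (Fin d) × EuclideanSpace ℝ (Fin d) =>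
        A + ‖p.1 - p.2‖ ^ α) π := (integrable_const A).add hrint
    rw [integral_const_mul, integral_add hsum (integrable_const c),
      integral_add (integrable_const A) hrint, integral_const, integral_const]
    simp [measure_univ, hIdef]
  -- bound I
  set ε : ℝ := (t - s) ^ H with hεdef
  have hε : 0 < ε := Real.rpow_pos_of_pos ht0 H
  have hI : I ≤ (1 + CH) * (t - s) ^ (H * α) := by
    have hstep : I ≤ ε ^ α + ε ^ (α - 1) * (CH * (t - s) ^ H) := by
      have h1 : I ≤ ∫ p, (ε ^ α + ε ^ (α - 1) * ‖p.1 - p.2‖) ∂π := by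
        refine integral_mono hrint ((integrable_const _).add (hIntW.const_mul _)) ?_
        intro p
        exact aux_rpow_le_eps hα0 hα1 (norm_nonneg _) hε
      have hsum2 : Integrable (fun p : EuclideanSpace ℝ (Fin d) × EuclideanSpace ℝ (Fin d) =>
          ε ^ (α - 1) * ‖p.1 - p.2‖) π := hIntW.const_mul _
      rw [integral_add (integrable_const _) hsum2, integral_const,
        integral_const_mul] at h1
      simp only [measure_univ, probReal_univ, ENNReal.toReal_one, one_smul] at h1
      refine h1.trans ?_
      have := mul_le_mul_of_nonneg_left hW (Real.rpow_nonneg hε.le (α - 1))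
      linarith
    have e1 : ε ^ α = (t - s) ^ (H * α) := (Real.rpow_mul ht0.le H α).symm
    have e2 : ε ^ (α - 1) * (t - s) ^ H = (t - s) ^ (H * α) := by
      rw [hεdef, ← Real.rpow_mul ht0.le, ← Real.rpow_add ht0]
      congr 1
      ring
    calc I ≤ ε ^ α + ε ^ (α - 1) * (CH * (t - s) ^ H) := hstep
      _ = ε ^ α + CH * (ε ^ (α - 1) * (t - s) ^ H) := by ring
      _ = (1 + CH) * (t - s) ^ (H * α) := by rw [e1, e2]; ring
  -- bound A
  have hA : A ≤ L ^ α * (t - s) ^ (δ * α) := by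
    have h1 : ‖Y t - Y s‖ ≤ L * (t - s) ^ δ := by
      have := hY s hs t ht
      rwa [abs_of_pos ht0] at this
    calc A ≤ (L * (t - s) ^ δ) ^ α :=
          Real.rpow_le_rpow (norm_nonneg _) h1 hα0.le
      _ = L ^ α * ((t - s) ^ δ) ^ α :=
          Real.mul_rpow hL (Real.rpow_nonneg ht0.le _)
      _ = L ^ α * (t - s) ^ (δ * α) := by rw [← Real.rpow_mul ht0.le]
  -- generic exponent comparison
  have hterm : ∀ e : ℝ, γ ≤ e → e - γ ≤ max β 1 →
      (t - s) ^ e ≤ K ^ (max β 1) * (t - s) ^ γ := by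
    intro e he1 he2
    have h1 : (t - s) ^ e = (t - s) ^ (e - γ) * (t - s) ^ γ := by
      rw [← Real.rpow_add ht0]
      congr 1
      ring
    rw [h1]
    have h2 : (t - s) ^ (e - γ) ≤ K ^ (e - γ) :=
      Real.rpow_le_rpow ht0.le htsT (by linarith)
    have h3 : K ^ (e - γ) ≤ K ^ (max β 1) :=
      Real.rpow_le_rpow_of_exponent_le hK1 he2
    exact mul_le_mul_of_nonneg_right (h2.trans h3) (Real.rpow_nonneg ht0.le _)
  have hαδ1 : α * δ ≤ 1 := mul_le_one₀ hα1 hδ0.le hδ1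
  have hαH1 : α * H ≤ 1 := mul_le_one₀ hα1 hH0.le hH1
  set M : ℝ := K ^ (max β 1) * (t - s) ^ γ with hMdef
  have hM0 : 0 ≤ M := mul_nonneg (Real.rpow_nonneg hK0.le _) (Real.rpow_nonneg ht0.le _)
  have t1 : (t - s) ^ (δ * α) ≤ M := by
    refine hterm (δ * α) (by linarith [hγδ, mul_comm α δ]) ?_
    have : δ * α ≤ 1 := by rw [mul_comm]; exact hαδ1
    have : δ * α - γ ≤ 1 := by linarith
    exact this.trans (le_max_right β 1)
  have t2 : (t - s) ^ (H * α) ≤ M := by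
    refine hterm (H * α) (by linarith [hγH, mul_comm α H]) ?_
    have : H * α ≤ 1 := by rw [mul_comm]; exact hαH1
    have : H * α - γ ≤ 1 := by linarith
    exact this.trans (le_max_right β 1)
  have t3 : c ≤ M := by
    rw [hcdef, abs_of_pos ht0]
    refine hterm β hγβ ?_
    have : β - γ ≤ β := by linarith
    exact this.trans (le_max_left β 1)
  have hLα : 0 ≤ L ^ α := Real.rpow_nonneg hL _
  have hAM : A ≤ L ^ α * M :=
    hA.trans (mul_le_mul_of_nonneg_left t1 hLα)
  have hIM : I ≤ (1 + CH) * M :=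
    hI.trans (mul_le_mul_of_nonneg_left t2 (by linarith))
  calc ‖(∫ z, b t (Y t) z ∂(μ t)) - ∫ z, b s (Y s) z ∂(μ s)‖
      ≤ C * (A + I + c) := key
    _ ≤ C * (L ^ α * M + (1 + CH) * M + M) := by
        refine mul_le_mul_of_nonneg_left ?_ hC
        linarith
    _ = C * (L ^ α + CH + 2) * K ^ (max β 1) * (t - s) ^ γ := by
        rw [hMdef]; ring
end

section
/- Let H ∈ (1/2,1), ε ∈ (0, 3/2−H) with γ := H − 1/2 + ε ≤ 1, and T > 0. There is a constant C depending only on H and ε such that for every s ∈ (0,T] and every continuous u : [0,T] → ℝ^d whose restriction to [0,s] is γ-Hölder, the quantity K(s) := s^{1/2−H} u(s)/Γ(3/2−H) + ((H−1/2)/Γ(3/2−H)) s^{H−1/2} ∫_0^s (s^{1/2−H} u(s) − r^{1/2−H} u(r)) (s−r)^{−H−1/2} dr satisfies ‖K(s)‖ ≤ C (s^{1/2−H} sup_{0≤r≤s} ‖u(r)‖ + s^{ε} [u]_{γ;[0,s]}). -/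
open MeasureTheory Set



lemma aux_concave {a r s : ℝ} (ha0 : 0 < a) (ha1 : a ≤ 1) (hr : 0 < r) (hrs : r ≤ s) :
    r ^ (-a) - s ^ (-a) ≤ (s - r) ^ (1/2 : ℝ) * r ^ (-a - 1/2) := by
  have hs : 0 < s := lt_of_lt_of_le hr hrs
  set y : ℝ := s / r with hy
  have hy1 : 1 ≤ y := (one_le_div hr).2 hrs
  have hy0 : 0 < y := lt_of_lt_of_le one_pos hy1
  have hbern : y ^ a ≤ 1 + a * (y - 1) := by
    have h := rpow_one_add_le_one_add_mul_self (s := y - 1) (by linarith) ha0.le ha1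
    simpa using h
  have hya : 1 ≤ y ^ a := Real.one_le_rpow hy1 ha0.le
  have key : 1 - y ^ (-a) ≤ a * (y - 1) := by
    rw [Real.rpow_neg hy0.le]
    have h2 : (0:ℝ) < y ^ a := by linarith
    have h1 : 1 - (y ^ a)⁻¹ ≤ y ^ a - 1 := by
      have : (y ^ a)⁻¹ ≥ 2 - y ^ a := by
        rw [ge_iff_le, ← sub_nonneg]
        have : (y ^ a)⁻¹ - (2 - y ^ a) = (y ^ a - 1) ^ 2 / y ^ a := by
          field_simp; ring
        rw [this]; positivity
      linarith
    linarith
  have hra : (0:ℝ) < r ^ (-a) := Real.rpow_pos_of_pos hr _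
  have hmul : r ^ (-a) * (1 - y ^ (-a)) ≤ r ^ (-a) * (a * (y - 1)) :=
    mul_le_mul_of_nonneg_left key hra.le
  have hA : r ^ (-a) * y ^ (-a) = s ^ (-a) := by
    rw [← Real.mul_rpow hr.le hy0.le]
    congr 1
    rw [hy]
    field_simp
  have hB : r ^ (-a) * (y - 1) = r ^ (-a - 1) * (s - r) := by
    have h1 : y - 1 = (s - r) / r := by rw [hy]; field_simp
    rw [h1, Real.rpow_sub hr, Real.rpow_one]
    field_simp
  have hX1 : r ^ (-a) - s ^ (-a) ≤ a * (r ^ (-a - 1) * (s - r)) := by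
    calc r ^ (-a) - s ^ (-a) = r ^ (-a) * (1 - y ^ (-a)) := by rw [mul_sub, mul_one, hA]
    _ ≤ r ^ (-a) * (a * (y - 1)) := hmul
    _ = a * (r ^ (-a) * (y - 1)) := by ring
    _ = a * (r ^ (-a - 1) * (s - r)) := by rw [hB]
  have hB0 : (0:ℝ) ≤ r ^ (-a - 1) * (s - r) := by
    have := Real.rpow_nonneg hr.le (-a - 1)
    nlinarith
  have hX1' : r ^ (-a) - s ^ (-a) ≤ r ^ (-a - 1) * (s - r) :=
    hX1.trans (by nlinarith)
  have hX2 : r ^ (-a) - s ^ (-a) ≤ r ^ (-a) := by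
    have := Real.rpow_nonneg hs.le (-a); linarith
  have hX0 : 0 ≤ r ^ (-a) - s ^ (-a) := by
    have := Real.rpow_le_rpow_of_nonpos hr hrs (neg_nonpos.2 ha0.le)
    linarith
  set X : ℝ := r ^ (-a) - s ^ (-a) with hX
  have hsq : X * X ≤ r ^ (-a) * (r ^ (-a - 1) * (s - r)) :=
    mul_le_mul hX2 hX1' hX0 hra.le
  have hXle : X ≤ Real.sqrt (r ^ (-a) * (r ^ (-a - 1) * (s - r))) := by
    rw [show X = Real.sqrt (X * X) from (Real.sqrt_mul_self hX0).symm]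
    exact Real.sqrt_le_sqrt hsq
  have hprod : r ^ (-a) * (r ^ (-a - 1) * (s - r)) = r ^ (-2*a - 1) * (s - r) := by
    rw [← mul_assoc, ← Real.rpow_add hr]
    ring_nf
  rw [hprod] at hXle
  have hfin : Real.sqrt (r ^ (-2*a - 1) * (s - r)) =
      (s - r) ^ (1/2 : ℝ) * r ^ (-a - 1/2) := by
    rw [Real.sqrt_mul (Real.rpow_nonneg hr.le _)]
    rw [Real.sqrt_eq_rpow, Real.sqrt_eq_rpow, ← Real.rpow_mul hr.le]
    ring_nf
  rw [hfin] at hXle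
  exact hXle

/-- value of `∫_{Ioc 0 c} x^p` for `-1 < p < 0`, `0 < c`. -/
lemma aux_int_rpow {p c : ℝ} (hp : -1 < p) (hp' : p < 0) (hc : 0 < c) :
    ∫ r in Ioc (0:ℝ) c, r ^ p = c ^ (p + 1) / (p + 1) := by
  rw [← intervalIntegral.integral_of_le hc.le]
  rw [integral_rpow (Or.inl hp)]
  rw [Real.zero_rpow (by linarith)]
  ring

/-- value of `∫_{Ioc a c} (c - x)^p` for `-1 < p < 0`, `a < c`. -/
lemma aux_int_rpow_sub {p a c : ℝ} (hp : -1 < p) (hp' : p < 0) (hac : a ≤ c) :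
    ∫ r in Ioc a c, (c - r) ^ p = (c - a) ^ (p + 1) / (p + 1) := by
  rw [← intervalIntegral.integral_of_le hac]
  rw [intervalIntegral.integral_comp_sub_left (fun x => x ^ p) c]
  rw [sub_self]
  rw [integral_rpow (Or.inl hp)]
  rw [Real.zero_rpow (by linarith)]
  ring

lemma aux_intOn_rpow_sub {p a c : ℝ} (hp : -1 < p) (hac : a ≤ c) :
    IntegrableOn (fun r => (c - r) ^ p) (Ioc a c) := by
  have h := (intervalIntegral.intervalIntegrable_rpow' (a := 0) (b := c - a) hp).comp_sub_left c
  simp only [sub_zero, sub_sub_cancel] at h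
  exact h.symm.1

set_option maxHeartbeats 1600000 in
/-- Bound on the inverse fractional-kernel operator for `H ∈ (1/2,1)`:
with `γ = H − 1/2 + ε ≤ 1`, there is a constant `C` depending only on `H` and `ε`
(in particular not on `T`) such that for every `s ∈ (0,T]` and continuous `u` which is
`γ`-Hölder on `[0,s]` (with sup bound `S` and Hölder constant `L` on `[0,s]`),
`‖K(s)‖ ≤ C (s^{1/2−H} S + s^ε L)`, where
`K(s) = s^{1/2−H} u(s)/Γ(3/2−H)
  + ((H−1/2)/Γ(3/2−H)) s^{H−1/2} ∫_0^s (s^{1/2−H}u(s) − r^{1/2−H}u(r))(s−r)^{−H−1/2} dr`. -/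
theorem fractional_kernel_inverse_bound
    {d : ℕ} (H ε : ℝ) (hH : H ∈ Ioo (1/2:ℝ) 1)
    (hε : 0 < ε) (hε' : ε < 3/2 - H) (hγ : H - 1/2 + ε ≤ 1) :
    ∃ C : ℝ, ∀ (T : ℝ), 0 < T → ∀ s ∈ Ioc (0:ℝ) T,
      ∀ (u : ℝ → EuclideanSpace ℝ (Fin d)), Continuous u →
      ∀ S L : ℝ,
        (∀ r ∈ Icc (0:ℝ) s, ‖u r‖ ≤ S) →
        (∀ r ∈ Icc (0:ℝ) s, ∀ t ∈ Icc (0:ℝ) s,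
          ‖u t - u r‖ ≤ L * |t - r| ^ (H - 1/2 + ε)) →
        ‖(s ^ ((1/2:ℝ) - H) / Real.Gamma ((3/2:ℝ) - H)) • u s +
              (((H - 1/2) / Real.Gamma ((3/2:ℝ) - H)) * s ^ (H - (1/2:ℝ))) •
                ∫ r in Ioc (0:ℝ) s,
                  ((s - r) ^ (-H - (1/2:ℝ))) •
                    (s ^ ((1/2:ℝ) - H) • u s - r ^ ((1/2:ℝ) - H) • u r)‖
          ≤ C * (s ^ ((1/2:ℝ) - H) * S + s ^ ε * L) := by
  obtain ⟨hH1, hH2⟩ := hH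
  set G : ℝ := Real.Gamma ((3/2:ℝ) - H) with hGdef
  have hG : 0 < G := Real.Gamma_pos_of_pos (by linarith)
  set c2 : ℝ := 2 / (1 - H) / (2:ℝ) ^ ((1:ℝ) - 2*H) with hc2def
  have hc2 : 0 < c2 := by
    apply div_pos (div_pos two_pos (by linarith))
    exact Real.rpow_pos_of_pos two_pos _
  refine ⟨(1 + (H - 1/2) * c2) / G + (H - 1/2) / (G * ε), ?_⟩
  intro T hT s hsT u hu S L hS hL
  obtain ⟨hs0, hsle⟩ := hsT
  have hhalf : 0 < s / 2 := by linarith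
  have hS0 : 0 ≤ S := le_trans (norm_nonneg _) (hS 0 ⟨le_rfl, hs0.le⟩)
  have hL0 : 0 ≤ L := by
    have h := hL 0 ⟨le_rfl, hs0.le⟩ s ⟨hs0.le, le_rfl⟩
    have h2 : (0:ℝ) < |s - 0| ^ (H - 1/2 + ε) :=
      Real.rpow_pos_of_pos (by rw [sub_zero, abs_of_pos hs0]; exact hs0) _
    nlinarith [norm_nonneg (u s - u 0)]
  -- the two integrands
  set f2 : ℝ → ℝ := fun r => (s - r) ^ (-H) * r ^ (-H) with hf2def
  set g : ℝ → ℝ := fun r =>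
    L * s ^ ((1/2:ℝ) - H) * (s - r) ^ (ε - 1) + S * f2 r with hgdef
  have hHne : (-1:ℝ) < -H := by linarith
  -- integrability of (s - r) ^ (ε - 1) on Ioc 0 s
  have hint1 : IntegrableOn (fun r => (s - r) ^ (ε - 1)) (Ioc (0:ℝ) s) :=
    aux_intOn_rpow_sub (by linarith) hs0.le
  have hI1 : ∫ r in Ioc (0:ℝ) s, (s - r) ^ (ε - 1) = s ^ ε / ε := by
    rw [aux_int_rpow_sub (by linarith) (by linarith) hs0.le, sub_zero]
    norm_num
  -- integrability of f2 on the two halves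
  have hb1int : IntegrableOn (fun r => (s/2) ^ (-H) * r ^ (-H)) (Ioc (0:ℝ) (s/2)) :=
    ((intervalIntegral.intervalIntegrable_rpow' (a := 0) (b := s/2) hHne).1).const_mul _
  have hcont1 : ContinuousOn f2 (Ioc (0:ℝ) (s/2)) := by
    apply ContinuousOn.mul
    · apply ContinuousOn.rpow_const (continuous_const.sub continuous_id).continuousOn
      intro x hx
      left
      simp only [Pi.sub_apply, id_eq]
      intro h
      have h2 := sub_eq_zero.mp h
      have h3 : x ≤ s/2 := hx.2
      linarith
    · apply ContinuousOn.rpow_const continuousOn_id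
      intro x hx
      simp only [id_eq]
      exact Or.inl (ne_of_gt hx.1)
  have hpt1 : ∀ r ∈ Ioc (0:ℝ) (s/2), ‖f2 r‖ ≤ (s/2) ^ (-H) * r ^ (-H) := by
    intro r hr
    have h1 : (0:ℝ) ≤ (s - r) ^ (-H) := Real.rpow_nonneg (by linarith [hr.1, hr.2]) _
    have h2 : (0:ℝ) ≤ r ^ (-H) := Real.rpow_nonneg hr.1.le _
    rw [hf2def]
    rw [Real.norm_eq_abs, abs_of_nonneg (mul_nonneg h1 h2)]
    apply mul_le_mul_of_nonneg_right _ h2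
    exact Real.rpow_le_rpow_of_nonpos hhalf (by linarith [hr.2]) (by linarith)
  have hint2a : IntegrableOn f2 (Ioc (0:ℝ) (s/2)) := by
    apply Integrable.mono' hb1int (hcont1.aestronglyMeasurable measurableSet_Ioc)
    exact (ae_restrict_iff' measurableSet_Ioc).2 (Filter.Eventually.of_forall hpt1)
  have hb2int : IntegrableOn (fun r => (s/2) ^ (-H) * (s - r) ^ (-H)) (Ioc (s/2) s) :=
    (aux_intOn_rpow_sub hHne (by linarith)).const_mul _
  have hcont2 : ContinuousOn f2 (Ioo (s/2) s) := by
    apply ContinuousOn.mul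
    · apply ContinuousOn.rpow_const (continuous_const.sub continuous_id).continuousOn
      intro x hx
      left
      simp only [Pi.sub_apply, id_eq]
      intro h
      have h2 := sub_eq_zero.mp h
      have h3 : x < s := hx.2
      linarith
    · apply ContinuousOn.rpow_const continuousOn_id
      intro x hx
      simp only [id_eq]
      exact Or.inl (ne_of_gt (lt_trans hhalf hx.1))
  have hpt2 : ∀ r ∈ Ioc (s/2) s, ‖f2 r‖ ≤ (s/2) ^ (-H) * (s - r) ^ (-H) := by
    intro r hr
    have h1 : (0:ℝ) ≤ (s - r) ^ (-H) := Real.rpow_nonneg (by linarith [hr.2]) _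
    have h2 : (0:ℝ) ≤ r ^ (-H) := Real.rpow_nonneg (by linarith [hr.1]) _
    rw [hf2def]
    rw [Real.norm_eq_abs, abs_of_nonneg (mul_nonneg h1 h2)]
    rw [mul_comm ((s/2) ^ (-H)) ((s - r) ^ (-H))]
    apply mul_le_mul_of_nonneg_left _ h1
    exact Real.rpow_le_rpow_of_nonpos hhalf hr.1.le (by linarith)
  have hint2b : IntegrableOn f2 (Ioc (s/2) s) := by
    have hIoo : IntegrableOn f2 (Ioo (s/2) s) := by
      apply Integrable.mono' (hb2int.mono_set Ioo_subset_Ioc_self)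
        (hcont2.aestronglyMeasurable measurableSet_Ioo)
      exact (ae_restrict_iff' measurableSet_Ioo).2
        (Filter.Eventually.of_forall (fun r hr => hpt2 r ⟨hr.1, hr.2.le⟩))
    exact hIoo.congr_set_ae Ioo_ae_eq_Ioc.symm
  have hunion : Ioc (0:ℝ) s = Ioc 0 (s/2) ∪ Ioc (s/2) s :=
    (Ioc_union_Ioc_eq_Ioc (by linarith) (by linarith)).symm
  have hint2 : IntegrableOn f2 (Ioc (0:ℝ) s) := by
    rw [hunion]; exact hint2a.union hint2b
  -- value bound for ∫ f2
  have hI2 : ∫ r in Ioc (0:ℝ) s, f2 r ≤ c2 * s ^ ((1:ℝ) - 2*H) := by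
    have hdisj : Disjoint (Ioc (0:ℝ) (s/2)) (Ioc (s/2) s) := Ioc_disjoint_Ioc_of_le le_rfl
    have hpc : (s/2) ^ (-H) * ((s/2) ^ (-H + 1) / (-H + 1)) = (s/2) ^ ((1:ℝ) - 2*H) / (1 - H) := by
      rw [← mul_div_assoc, ← Real.rpow_add hhalf]
      ring_nf
    have hA : ∫ r in Ioc (0:ℝ) (s/2), f2 r ≤ (s/2) ^ ((1:ℝ) - 2*H) / (1 - H) := by
      rw [← hpc]
      calc ∫ r in Ioc (0:ℝ) (s/2), f2 r
          ≤ ∫ r in Ioc (0:ℝ) (s/2), (s/2) ^ (-H) * r ^ (-H) := by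
            apply setIntegral_mono_on hint2a hb1int measurableSet_Ioc
            intro r hr
            exact (le_abs_self _).trans (by rw [← Real.norm_eq_abs]; exact hpt1 r hr)
        _ = (s/2) ^ (-H) * ((s/2) ^ (-H + 1) / (-H + 1)) := by
            rw [integral_const_mul, aux_int_rpow hHne (by linarith) hhalf]
    have hB : ∫ r in Ioc (s/2) s, f2 r ≤ (s/2) ^ ((1:ℝ) - 2*H) / (1 - H) := by
      rw [← hpc]
      calc ∫ r in Ioc (s/2) s, f2 r
          ≤ ∫ r in Ioc (s/2) s, (s/2) ^ (-H) * (s - r) ^ (-H) := by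
            apply setIntegral_mono_on hint2b hb2int measurableSet_Ioc
            intro r hr
            exact (le_abs_self _).trans (by rw [← Real.norm_eq_abs]; exact hpt2 r hr)
        _ = (s/2) ^ (-H) * ((s/2) ^ (-H + 1) / (-H + 1)) := by
            rw [integral_const_mul, aux_int_rpow_sub hHne (by linarith) (by linarith),
              show s - s/2 = s/2 by ring]
    have hval : 2 * ((s/2) ^ ((1:ℝ) - 2*H) / (1 - H)) = c2 * s ^ ((1:ℝ) - 2*H) := by
      have h2p : ((2:ℝ)) ^ ((1:ℝ) - 2*H) ≠ 0 := ne_of_gt (Real.rpow_pos_of_pos two_pos _)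
      have h1H : (1:ℝ) - H ≠ 0 := by linarith
      rw [Real.div_rpow hs0.le (by norm_num : (0:ℝ) ≤ 2), hc2def]
      field_simp
    calc ∫ r in Ioc (0:ℝ) s, f2 r
        = (∫ r in Ioc (0:ℝ) (s/2), f2 r) + ∫ r in Ioc (s/2) s, f2 r := by
          rw [hunion, setIntegral_union hdisj measurableSet_Ioc hint2a hint2b]
      _ ≤ 2 * ((s/2) ^ ((1:ℝ) - 2*H) / (1 - H)) := by linarith
      _ = c2 * s ^ ((1:ℝ) - 2*H) := hval
  -- pointwise bound
  have hpt : ∀ r ∈ Ioc (0:ℝ) s,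
      ‖((s - r) ^ (-H - (1/2:ℝ))) •
          (s ^ ((1/2:ℝ) - H) • u s - r ^ ((1/2:ℝ) - H) • u r)‖ ≤ g r := by
    intro r hr
    obtain ⟨hr0, hrs⟩ := hr
    rcases eq_or_lt_of_le hrs with heq | hlt
    · subst heq
      rw [hgdef, hf2def]
      simp only [sub_self]
      rw [Real.zero_rpow (by linarith : -H - (1/2:ℝ) ≠ 0), zero_smul, norm_zero,
        Real.zero_rpow (by linarith : ε - 1 ≠ 0), Real.zero_rpow (by linarith : -H ≠ 0)]
      simp
    · have hsr : 0 < s - r := by linarith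
      have hq0 : (0:ℝ) ≤ (s - r) ^ (-H - (1/2:ℝ)) := Real.rpow_nonneg hsr.le _
      have hp0 : (0:ℝ) ≤ s ^ ((1/2:ℝ) - H) := Real.rpow_nonneg hs0.le _
      have hdecomp : s ^ ((1/2:ℝ) - H) • u s - r ^ ((1/2:ℝ) - H) • u r
          = s ^ ((1/2:ℝ) - H) • (u s - u r)
            + (s ^ ((1/2:ℝ) - H) - r ^ ((1/2:ℝ) - H)) • u r := by
        rw [smul_sub, sub_smul]; abel
      have hrple : s ^ ((1/2:ℝ) - H) ≤ r ^ ((1/2:ℝ) - H) :=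
        Real.rpow_le_rpow_of_nonpos hr0 hrs (by linarith)
      have hHolder : ‖u s - u r‖ ≤ L * (s - r) ^ (H - 1/2 + ε) := by
        have h := hL r ⟨hr0.le, hrs⟩ s ⟨hs0.le, le_rfl⟩
        rwa [abs_of_pos hsr] at h
      have hconc : r ^ ((1/2:ℝ) - H) - s ^ ((1/2:ℝ) - H)
          ≤ (s - r) ^ (1/2:ℝ) * r ^ (-H) := by
        have h := aux_concave (a := H - 1/2) (by linarith) (by linarith) hr0 hrs
        have e1 : -(H - 1/2) = (1/2:ℝ) - H := by ring
        have e2 : -(H - 1/2) - 1/2 = -H := by ring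
        rw [e2, e1] at h
        exact h
      have hur : ‖u r‖ ≤ S := hS r ⟨hr0.le, hrs⟩
      have hinner : ‖s ^ ((1/2:ℝ) - H) • u s - r ^ ((1/2:ℝ) - H) • u r‖
          ≤ s ^ ((1/2:ℝ) - H) * (L * (s - r) ^ (H - 1/2 + ε))
            + ((s - r) ^ (1/2:ℝ) * r ^ (-H)) * S := by
        rw [hdecomp]
        refine (norm_add_le _ _).trans ?_
        have t1 : ‖s ^ ((1/2:ℝ) - H) • (u s - u r)‖
            ≤ s ^ ((1/2:ℝ) - H) * (L * (s - r) ^ (H - 1/2 + ε)) := by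
          rw [norm_smul, Real.norm_eq_abs, abs_of_nonneg hp0]
          exact mul_le_mul_of_nonneg_left hHolder hp0
        have t2 : ‖(s ^ ((1/2:ℝ) - H) - r ^ ((1/2:ℝ) - H)) • u r‖
            ≤ ((s - r) ^ (1/2:ℝ) * r ^ (-H)) * S := by
          rw [norm_smul, Real.norm_eq_abs, abs_of_nonpos (by linarith), neg_sub]
          exact mul_le_mul hconc hur (norm_nonneg _)
            (mul_nonneg (Real.rpow_nonneg hsr.le _) (Real.rpow_nonneg hr0.le _))
        linarith
      have e3 : (s - r) ^ (-H - (1/2:ℝ)) * (s - r) ^ (H - 1/2 + ε) = (s - r) ^ (ε - 1) := by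
        rw [← Real.rpow_add hsr]; congr 1; ring
      have e4 : (s - r) ^ (-H - (1/2:ℝ)) * (s - r) ^ (1/2:ℝ) = (s - r) ^ (-H) := by
        rw [← Real.rpow_add hsr]; congr 1; ring
      calc ‖((s - r) ^ (-H - (1/2:ℝ))) •
              (s ^ ((1/2:ℝ) - H) • u s - r ^ ((1/2:ℝ) - H) • u r)‖
          = (s - r) ^ (-H - (1/2:ℝ))
              * ‖s ^ ((1/2:ℝ) - H) • u s - r ^ ((1/2:ℝ) - H) • u r‖ := by
            rw [norm_smul, Real.norm_eq_abs, abs_of_nonneg hq0]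
        _ ≤ (s - r) ^ (-H - (1/2:ℝ)) * (s ^ ((1/2:ℝ) - H) * (L * (s - r) ^ (H - 1/2 + ε))
              + ((s - r) ^ (1/2:ℝ) * r ^ (-H)) * S) := mul_le_mul_of_nonneg_left hinner hq0
        _ = g r := by
            rw [hgdef, hf2def]
            simp only []
            linear_combination (L * s ^ ((1/2:ℝ) - H)) * e3 + (S * r ^ (-H)) * e4
  -- integral of g
  have hgint : IntegrableOn g (Ioc (0:ℝ) s) :=
    (hint1.const_mul (L * s ^ ((1/2:ℝ) - H))).add (hint2.const_mul S)
  have hgval : ∫ r in Ioc (0:ℝ) s, g r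
      ≤ L * s ^ ((1/2:ℝ) - H) * (s ^ ε / ε) + S * (c2 * s ^ ((1:ℝ) - 2*H)) := by
    rw [hgdef]
    rw [integral_add (hint1.const_mul (L * s ^ ((1/2:ℝ) - H))) (hint2.const_mul S)]
    rw [integral_const_mul, integral_const_mul, hI1]
    have := mul_le_mul_of_nonneg_left hI2 hS0
    linarith
  have hKey : ‖∫ r in Ioc (0:ℝ) s,
      ((s - r) ^ (-H - (1/2:ℝ))) •
        (s ^ ((1/2:ℝ) - H) • u s - r ^ ((1/2:ℝ) - H) • u r)‖
      ≤ ∫ r in Ioc (0:ℝ) s, g r := by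
    apply norm_integral_le_of_norm_le hgint
    exact (ae_restrict_iff' measurableSet_Ioc).2 (Filter.Eventually.of_forall hpt)
  -- final assembly
  have hnorm1 : ‖(s ^ ((1/2:ℝ) - H) / G) • u s‖ ≤ s ^ ((1/2:ℝ) - H) / G * S := by
    have hcoef1 : (0:ℝ) ≤ s ^ ((1/2:ℝ) - H) / G :=
      div_nonneg (Real.rpow_nonneg hs0.le _) hG.le
    rw [norm_smul, Real.norm_eq_abs, abs_of_nonneg hcoef1]
    exact mul_le_mul_of_nonneg_left (hS s ⟨hs0.le, le_rfl⟩) hcoef1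
  have hcoef2 : (0:ℝ) ≤ (H - 1/2) / G * s ^ (H - (1/2:ℝ)) :=
    mul_nonneg (div_nonneg (by linarith) hG.le) (Real.rpow_nonneg hs0.le _)
  have hnorm2 : ‖(((H - 1/2) / G) * s ^ (H - (1/2:ℝ))) •
        ∫ r in Ioc (0:ℝ) s,
          ((s - r) ^ (-H - (1/2:ℝ))) •
            (s ^ ((1/2:ℝ) - H) • u s - r ^ ((1/2:ℝ) - H) • u r)‖
      ≤ ((H - 1/2) / G * s ^ (H - (1/2:ℝ)))
          * (L * s ^ ((1/2:ℝ) - H) * (s ^ ε / ε) + S * (c2 * s ^ ((1:ℝ) - 2*H))) := by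
    rw [norm_smul, Real.norm_eq_abs, abs_of_nonneg hcoef2]
    exact mul_le_mul_of_nonneg_left (hKey.trans hgval) hcoef2
  have e5 : s ^ (H - (1/2:ℝ)) * (s ^ ((1/2:ℝ) - H) * s ^ ε) = s ^ ε := by
    rw [← Real.rpow_add hs0, ← Real.rpow_add hs0]
    congr 1; ring
  have e6 : s ^ (H - (1/2:ℝ)) * s ^ ((1:ℝ) - 2*H) = s ^ ((1/2:ℝ) - H) := by
    rw [← Real.rpow_add hs0]
    congr 1; ring
  have hexp : (H - 1/2) / G * s ^ (H - (1/2:ℝ))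
        * (L * s ^ ((1/2:ℝ) - H) * (s ^ ε / ε) + S * (c2 * s ^ ((1:ℝ) - 2*H)))
      = (H - 1/2) / (G * ε) * (s ^ ε * L)
        + (H - 1/2) * c2 / G * (s ^ ((1/2:ℝ) - H) * S) := by
    have hεne : ε ≠ 0 := ne_of_gt hε
    have hGne : G ≠ 0 := ne_of_gt hG
    calc (H - 1/2) / G * s ^ (H - (1/2:ℝ))
          * (L * s ^ ((1/2:ℝ) - H) * (s ^ ε / ε) + S * (c2 * s ^ ((1:ℝ) - 2*H)))
        = (H - 1/2) / G * (L / ε) * (s ^ (H - (1/2:ℝ)) * (s ^ ((1/2:ℝ) - H) * s ^ ε))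
          + (H - 1/2) / G * (S * c2) * (s ^ (H - (1/2:ℝ)) * s ^ ((1:ℝ) - 2*H)) := by
          ring
      _ = (H - 1/2) / (G * ε) * (s ^ ε * L)
          + (H - 1/2) * c2 / G * (s ^ ((1/2:ℝ) - H) * S) := by
          rw [e5, e6]
          field_simp
  have hX : (0:ℝ) ≤ s ^ ((1/2:ℝ) - H) * S := mul_nonneg (Real.rpow_nonneg hs0.le _) hS0
  have hY : (0:ℝ) ≤ s ^ ε * L := mul_nonneg (Real.rpow_nonneg hs0.le _) hL0
  have hc1 : (0:ℝ) ≤ (H - 1/2) / (G * ε) :=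
    div_nonneg (by linarith) (mul_nonneg hG.le hε.le)
  have hc0 : (0:ℝ) ≤ (1 + (H - 1/2) * c2) / G :=
    div_nonneg (by nlinarith) hG.le
  calc ‖(s ^ ((1/2:ℝ) - H) / G) • u s +
        (((H - 1/2) / G) * s ^ (H - (1/2:ℝ))) •
          ∫ r in Ioc (0:ℝ) s,
            ((s - r) ^ (-H - (1/2:ℝ))) •
              (s ^ ((1/2:ℝ) - H) • u s - r ^ ((1/2:ℝ) - H) • u r)‖
      ≤ s ^ ((1/2:ℝ) - H) / G * S
        + ((H - 1/2) / G * s ^ (H - (1/2:ℝ)))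
            * (L * s ^ ((1/2:ℝ) - H) * (s ^ ε / ε) + S * (c2 * s ^ ((1:ℝ) - 2*H))) :=
        (norm_add_le _ _).trans (add_le_add hnorm1 hnorm2)
    _ = (1 / G) * (s ^ ((1/2:ℝ) - H) * S)
        + ((H - 1/2) / (G * ε) * (s ^ ε * L)
          + (H - 1/2) * c2 / G * (s ^ ((1/2:ℝ) - H) * S)) := by
        rw [hexp]; ring
    _ ≤ ((1 + (H - 1/2) * c2) / G + (H - 1/2) / (G * ε))
          * (s ^ ((1/2:ℝ) - H) * S + s ^ ε * L) := by
        have hsumc : (1:ℝ) / G + (H - 1/2) * c2 / G = (1 + (H - 1/2) * c2) / G := by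
          field_simp
        nlinarith [mul_nonneg hc1 hX, mul_nonneg hc0 hY, hsumc]
end
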